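/- Let S, C, N₀, N₁ ∈ ℝ with S² + C² = 1, and let v₀, v₁ ∈ ℝ with v₁ ≠ 0. Then the determinant of the 2×2 matrix with rows [ (N₀S − v₀C)/v₁ , S/v₁ ] and [ (N₀N₁/v₁ − v₀)S − (N₀ + N₁v₀/v₁)C , N₁S/v₁ − C ] equals v₀/v₁. -/

import Mathlib

/-- The Jacobian of the impact map `P_I` in `(φ, v)` coordinates has determinant
`v₀ / v₁`, where `S = sin (t₁ - t₀)`, `C = cos (t₁ - t₀)` and `N_i` are the
accelerations just before the impacts. -/
theorem impact_map_jacobian_det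
    (S C N₀ N₁ v₀ v₁ : ℝ) (h : S ^ 2 + C ^ 2 = 1) (hv : v₁ ≠ 0) :
    (Matrix.det !![(N₀ * S - v₀ * C) / v₁, S / v₁;
        (N₀ * N₁ / v₁ - v₀) * S - (N₀ + N₁ * v₀ / v₁) * C, N₁ * S / v₁ - C]) =
      v₀ / v₁ := by
  rw [Matrix.det_fin_two_of]
  field_simp
  linear_combination v₀ * v₁ * h
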